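/- arXiv:2502.13596 — 2 statements merged into one kernel-verified Lean document; each statement's English description precedes it below -/
import Mathlib

section
/- If H is an induced subgraph of a graph G, then the energy of H is at most the energy of G, where energy is the sum of absolute values of adjacency eigenvalues. -/
open Matrix in
private lemma quad_diag {k l : Type*} [Fintype k] [Fintype l] [DecidableEq l]
    (R : Matrix k l ℝ) (d : l → ℝ) (v : k → ℝ) :
    v ⬝ᵥ ((R * Matrix.diagonal d * Rᵀ) *ᵥ v) = ∑ a, d a * ((Rᵀ *ᵥ v) a) ^ 2 := by
  rw [← Matrix.mulVec_mulVec, ← Matrix.mulVec_mulVec, Matrix.dotProduct_mulVec,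
    ← Matrix.mulVec_transpose]
  simp only [dotProduct, Matrix.mulVec_diagonal]
  exact Finset.sum_congr rfl fun a _ => by ring

open Matrix in
theorem key {n m : Type*} [Fintype n] [Fintype m] [DecidableEq n] [DecidableEq m]
    (A : Matrix n n ℝ) (f : m → n) (hf : Function.Injective f)
    (hA : A.IsHermitian) (hB : (A.submatrix f f).IsHermitian) :
    ∑ i, |hB.eigenvalues i| ≤ ∑ i, |hA.eigenvalues i| := by
  set B : Matrix m m ℝ := A.submatrix f f with hBdef
  set U : Matrix n n ℝ := (hA.eigenvectorUnitary : Matrix n n ℝ) with hU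
  set W : Matrix m m ℝ := (hB.eigenvectorUnitary : Matrix m m ℝ) with hW
  set lam := hA.eigenvalues
  set mu := hB.eigenvalues
  have hUU : star U * U = 1 := Unitary.coe_star_mul_self hA.eigenvectorUnitary
  have hWW : star W * W = 1 := Unitary.coe_star_mul_self hB.eigenvectorUnitary
  have hWW' : W * star W = 1 := Unitary.coe_mul_star_self hB.eigenvectorUnitary
  have hstarU : star U = Uᵀ := Matrix.conjTranspose_eq_transpose_of_trivial U
  have hstarW : star W = Wᵀ := Matrix.conjTranspose_eq_transpose_of_trivial W
  have hAspec : A = U * Matrix.diagonal lam * star U := by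
    simpa using hA.spectral_theorem
  have hBspec : B = W * Matrix.diagonal mu * star W := by
    simpa using hB.spectral_theorem
  set g : m → ℝ := fun i => Real.sign (mu i) with hg
  set S : Matrix m m ℝ := W * Matrix.diagonal g * star W with hS
  -- step 1 : trace (B * S) = ∑ |mu|
  have step1 : (B * S).trace = ∑ i, |mu i| := by
    have hBS : B * S = W * Matrix.diagonal (fun i => mu i * g i) * star W := by
      rw [hBspec, hS]
      simp only [Matrix.mul_assoc]
      rw [← Matrix.mul_assoc (star W) W, hWW, Matrix.one_mul,
        ← Matrix.mul_assoc (Matrix.diagonal mu) (Matrix.diagonal g),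
        Matrix.diagonal_mul_diagonal]
    rw [hBS, Matrix.trace_mul_cycle, hWW, Matrix.one_mul, Matrix.trace_diagonal]
    refine Finset.sum_congr rfl fun i _ => ?_
    have hgi : g i = (mu i).sign := rfl
    rw [hgi]
    rcases lt_trichotomy (mu i) 0 with h | h | h
    · rw [Real.sign_of_neg h, abs_of_neg h]; ring
    · simp [h]
    · rw [Real.sign_of_pos h, abs_of_pos h]; ring
  set P : Matrix n m ℝ := Matrix.of (fun i a => if i = f a then 1 else 0) with hP
  have hPx : ∀ x : n → ℝ, Pᵀ *ᵥ x = fun a => x (f a) := by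
    intro x; ext a
    simp [Matrix.mulVec, dotProduct, hP, ite_mul, Finset.sum_ite_eq]
  have hPAP : Pᵀ * A * P = B := by
    ext a b
    simp [Matrix.mul_apply, hP, ite_mul, mul_ite, Finset.sum_ite_eq, hBdef,
      Finset.sum_ite_eq', Matrix.submatrix_apply]
  set M : Matrix n n ℝ := P * S * Pᵀ with hM
  have step2 : (A * M).trace = (B * S).trace := by
    rw [hM, show A * (P * S * Pᵀ) = (A * P * S) * Pᵀ by simp only [Matrix.mul_assoc],
      Matrix.trace_mul_comm,
      show Pᵀ * (A * P * S) = (Pᵀ * A * P) * S by simp only [Matrix.mul_assoc], hPAP]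
  set c : n → ℝ := fun i => (star U * M * U) i i with hc
  have step3 : (A * M).trace = ∑ i, lam i * c i := by
    rw [show A * M = U * (Matrix.diagonal lam * (star U * M)) by rw [hAspec]; noncomm_ring,
      Matrix.trace_mul_comm,
      show Matrix.diagonal lam * (star U * M) * U = Matrix.diagonal lam * (star U * M * U) by
        noncomm_ring]
    simp only [Matrix.trace, Matrix.diag, Matrix.diagonal_mul]
    rfl
  have step4 : ∀ i, |c i| ≤ 1 := by
    intro i
    set x : n → ℝ := fun a => U a i with hx
    have hci : c i = x ⬝ᵥ (M *ᵥ x) := by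
      rw [hc, hstarU]
      simp only [Matrix.mul_apply, dotProduct, Matrix.mulVec, Matrix.transpose_apply,
        Finset.sum_mul, Finset.mul_sum]
      rw [Finset.sum_comm]
      exact Finset.sum_congr rfl fun a _ => Finset.sum_congr rfl fun b _ => by
        simp [hx]; ring
    set Q : Matrix n m ℝ := P * W with hQ
    have hMQ : M = Q * Matrix.diagonal g * Qᵀ := by
      rw [hM, hS, hstarW, hQ, Matrix.transpose_mul]; simp only [Matrix.mul_assoc]
    have hci2 : c i = ∑ a, g a * ((Qᵀ *ᵥ x) a) ^ 2 := by
      rw [hci, hMQ, quad_diag]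
    -- norm bound on z := Qᵀ x
    have hz2 : ∑ a, ((Qᵀ *ᵥ x) a) ^ 2 ≤ 1 := by
      have h1 : ∑ a, ((Qᵀ *ᵥ x) a) ^ 2 = (Qᵀ *ᵥ x) ⬝ᵥ (Qᵀ *ᵥ x) := by
        simp [dotProduct, sq]
      have h2 : (Qᵀ *ᵥ x) ⬝ᵥ (Qᵀ *ᵥ x) = (Pᵀ *ᵥ x) ⬝ᵥ (Pᵀ *ᵥ x) := by
        rw [hQ, Matrix.transpose_mul, ← Matrix.mulVec_mulVec,
          Matrix.dotProduct_mulVec, Matrix.vecMul_transpose, Matrix.mulVec_mulVec,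
          ← hstarW, hWW', Matrix.one_mulVec]
      have h3 : (Pᵀ *ᵥ x) ⬝ᵥ (Pᵀ *ᵥ x) = ∑ a, (x (f a)) ^ 2 := by
        rw [hPx]; simp [dotProduct, sq]
      have h4 : ∑ a, (x (f a)) ^ 2 ≤ ∑ j, (x j) ^ 2 :=
        calc ∑ a, (x (f a)) ^ 2 = ∑ j ∈ Finset.univ.image f, (x j) ^ 2 :=
              (Finset.sum_image (f := fun j => (x j) ^ 2) (fun a _ b _ h => hf h)).symm
          _ ≤ ∑ j, (x j) ^ 2 := Finset.sum_le_sum_of_subset_of_nonneg (Finset.subset_univ _)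
              (fun j _ _ => sq_nonneg _)
      have h5 : ∑ j, (x j) ^ 2 = 1 := by
        have := congrFun (congrFun hUU i) i
        simp only [Matrix.mul_apply, hstarU, Matrix.transpose_apply, Matrix.one_apply_eq] at this
        rw [← this]
        exact Finset.sum_congr rfl fun a _ => by rw [hx]; ring
      rw [h1, h2, h3, ← h5]; exact h4
    calc |c i| ≤ ∑ a, |g a * ((Qᵀ *ᵥ x) a) ^ 2| := hci2 ▸ Finset.abs_sum_le_sum_abs _ _
      _ ≤ ∑ a, ((Qᵀ *ᵥ x) a) ^ 2 := by
          refine Finset.sum_le_sum fun a _ => ?_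
          rw [abs_mul, abs_sq]
          calc |g a| * ((Qᵀ *ᵥ x) a) ^ 2 ≤ 1 * ((Qᵀ *ᵥ x) a) ^ 2 := by
                refine mul_le_mul_of_nonneg_right ?_ (sq_nonneg _)
                rcases Real.sign_apply_eq (mu a) with h | h | h <;>
                  simp [hg, h]
            _ = _ := one_mul _
      _ ≤ 1 := hz2
  calc ∑ i, |mu i| = ∑ i, lam i * c i := by rw [← step1, ← step2, step3]
    _ ≤ ∑ i, |lam i| := by
        refine Finset.sum_le_sum fun i _ => ?_
        calc lam i * c i ≤ |lam i * c i| := le_abs_self _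
          _ = |lam i| * |c i| := abs_mul _ _
          _ ≤ |lam i| * 1 := mul_le_mul_of_nonneg_left (step4 i) (abs_nonneg _)
          _ = |lam i| := mul_one _

theorem stmt_12 {V : Type*} [Fintype V] [DecidableEq V] (G : SimpleGraph V) [DecidableRel G.Adj]
    (s : Finset V)
    (hA : (G.adjMatrix ℝ).IsHermitian)
    (hB : (((G.induce (s : Set V)).adjMatrix ℝ)).IsHermitian) :
    ∑ i, |hB.eigenvalues i| ≤ ∑ i, |hA.eigenvalues i| := by
  have heq : (G.induce (s : Set V)).adjMatrix ℝ
      = (G.adjMatrix ℝ).submatrix Subtype.val Subtype.val := by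
    ext i j
    simp [Matrix.submatrix_apply, SimpleGraph.comap_adj]
  revert hB
  rw [heq]
  intro hB
  exact key (G.adjMatrix ℝ) Subtype.val Subtype.val_injective hA hB
end

section
/- If G is a C₄-free graph on n vertices (G contains no cycle of length 4 as a subgraph), then the number of edges of G is at most n(1 + √(4n − 3))/4. -/
theorem stmt_17 {V : Type*} [Fintype V] [DecidableEq V] (G : SimpleGraph V) [DecidableRel G.Adj]
    (n : ℕ) (hn : n = Fintype.card V)
    (hC4free : ∀ u v : V, u ≠ v → Fintype.card (G.commonNeighbors u v) ≤ 1) :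
    (G.edgeFinset.card : ℝ) ≤ (n : ℝ) * (1 + Real.sqrt (4 * (n : ℝ) - 3)) / 4 := by
  classical
  rcases Nat.eq_zero_or_pos n with hn0 | hn1
  · have : IsEmpty V := by
      rw [hn0] at hn; exact Fintype.card_eq_zero_iff.mp hn.symm
    have he : G.edgeFinset = ∅ := Finset.eq_empty_of_isEmpty _
    simp [he, hn0]
  -- double counting
  have h1 : ∀ v : V, Finset.univ.offDiag.filter (fun p : V × V => G.Adj v p.1 ∧ G.Adj v p.2)
      = (G.neighborFinset v).offDiag := by
    intro v; ext p
    simp only [Finset.mem_filter, Finset.mem_offDiag, Finset.mem_univ,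
      SimpleGraph.mem_neighborFinset, true_and]
    tauto
  have hdc : ∑ v : V, ((G.neighborFinset v).offDiag).card
      = ∑ p ∈ Finset.univ.offDiag, (Finset.univ.filter (fun v => G.Adj v p.1 ∧ G.Adj v p.2)).card := by
    have : ∀ v : V, ((G.neighborFinset v).offDiag).card
        = ∑ p ∈ Finset.univ.offDiag, (if G.Adj v p.1 ∧ G.Adj v p.2 then 1 else 0) := by
      intro v; rw [← h1 v, Finset.card_filter]
    rw [Finset.sum_congr rfl (fun v _ => this v), Finset.sum_comm]
    exact Finset.sum_congr rfl (fun p _ => (Finset.card_filter _ _).symm)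
  have hbound : ∀ p ∈ Finset.univ.offDiag,
      (Finset.univ.filter (fun v : V => G.Adj v p.1 ∧ G.Adj v p.2)).card ≤ 1 := by
    intro p hp
    have hne : p.1 ≠ p.2 := (Finset.mem_offDiag.mp hp).2.2
    have h := hC4free p.1 p.2 hne
    have hcard : (Finset.univ.filter (fun v : V => G.Adj v p.1 ∧ G.Adj v p.2)).card
        = Fintype.card (G.commonNeighbors p.1 p.2) := by
      rw [← Set.toFinset_card]
      congr 1
      ext x
      simp only [Finset.mem_filter, Finset.mem_univ, true_and, Set.mem_toFinset,
        SimpleGraph.mem_commonNeighbors]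
      exact ⟨fun ⟨a, b⟩ => ⟨a.symm, b.symm⟩, fun ⟨a, b⟩ => ⟨a.symm, b.symm⟩⟩
    rw [hcard]; exact h
  have hsum : ∑ v : V, ((G.neighborFinset v).offDiag).card ≤ n * n - n := by
    calc ∑ v : V, ((G.neighborFinset v).offDiag).card
        ≤ ∑ p ∈ Finset.univ.offDiag, 1 := by rw [hdc]; exact Finset.sum_le_sum hbound
      _ = (Finset.univ : Finset V).offDiag.card := by simp
      _ = n * n - n := by rw [Finset.offDiag_card, Finset.card_univ, hn]
  -- move to reals
  set e : ℝ := (G.edgeFinset.card : ℝ) with he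
  have hdeg : ∑ v : V, (G.degree v : ℝ) = 2 * e := by
    rw [he]
    exact_mod_cast congrArg (Nat.cast : ℕ → ℝ) G.sum_degrees_eq_twice_card_edges
  have hdle : ∀ d : ℕ, d ≤ d * d := by
    intro d
    rcases Nat.eq_zero_or_pos d with h | h
    · simp [h]
    · exact Nat.le_mul_of_pos_left d h
  have hQ : ∑ v : V, ((G.degree v : ℝ)^2 - (G.degree v : ℝ)) ≤ (n : ℝ) * n - n := by
    have hcast : ∀ v : V, (((G.neighborFinset v).offDiag.card : ℝ))
        = (G.degree v : ℝ)^2 - (G.degree v : ℝ) := by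
      intro v
      rw [Finset.offDiag_card]
      have : (G.neighborFinset v).card = G.degree v := G.card_neighborFinset_eq_degree v
      rw [this, Nat.cast_sub (hdle _)]
      push_cast; ring
    calc ∑ v : V, ((G.degree v : ℝ)^2 - (G.degree v : ℝ))
        = ((∑ v : V, ((G.neighborFinset v).offDiag).card : ℕ) : ℝ) := by
          rw [Nat.cast_sum]; exact (Finset.sum_congr rfl (fun v _ => (hcast v))).symm
      _ ≤ ((n * n - n : ℕ) : ℝ) := by exact_mod_cast hsum
      _ = (n : ℝ) * n - n := by rw [Nat.cast_sub (hdle n)]; push_cast; ring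
  have hQ2 : ∑ v : V, (G.degree v : ℝ)^2 ≤ (n : ℝ) * n - n + 2 * e := by
    have := Finset.sum_sub_distrib (f := fun v : V => (G.degree v : ℝ)^2)
      (g := fun v : V => (G.degree v : ℝ)) (s := Finset.univ)
    rw [this, hdeg] at hQ
    linarith
  have hCS : (2 * e)^2 ≤ (n : ℝ) * ∑ v : V, (G.degree v : ℝ)^2 := by
    have := sq_sum_le_card_mul_sum_sq (s := (Finset.univ : Finset V))
      (f := fun v : V => (G.degree v : ℝ))
    rw [hdeg] at this
    rwa [Finset.card_univ, ← hn] at this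
  have hkey : 4 * e^2 ≤ (n : ℝ) * ((n : ℝ) * n - n + 2 * e) := by
    nlinarith [mul_le_mul_of_nonneg_left hQ2 (by positivity : (0:ℝ) ≤ (n:ℝ))]
  -- final algebra
  set s : ℝ := Real.sqrt (4 * (n : ℝ) - 3) with hs
  have hs0 : 0 ≤ s := Real.sqrt_nonneg _
  have hn1' : (1 : ℝ) ≤ (n : ℝ) := by exact_mod_cast hn1
  have hs2 : s^2 = 4 * (n : ℝ) - 3 := Real.sq_sqrt (by linarith)
  have he0 : 0 ≤ e := by positivity
  nlinarith [mul_nonneg (mul_nonneg (by linarith : (0:ℝ) ≤ (n:ℝ)) hs0) he0,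
    sq_nonneg (4 * e - n - n * s), mul_nonneg hs0 he0,
    mul_nonneg (by linarith : (0:ℝ) ≤ (n:ℝ)) hs0]
end
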